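/- Let (a_n), (b_n) be sequences of nonnegative reals satisfying the recursion a_{n+1} = r_n a_n + δ_n b_n and b_{n+1} = (r_n − δ_n) b_n, where r_n ≥ 2 and δ_n ∈ {0, 1} for all n. If a_0 = 0 and b_0 > 0, and δ_n = 1 for all n ≥ N, then b_n / (a_n + b_n) → 0 as n → ∞ provided ∑_{n ≥ N} 1/r_n diverges. -/

import Mathlib

open Filter

/-- Population dynamics: with `a_{n+1} = r_n a_n + δ_n b_n`, `b_{n+1} = (r_n − δ_n) b_n`,
`r_n ≥ 2`, `δ_n ∈ {0,1}`, `a_0 = 0`, `b_0 > 0`, and `δ_n = 1` for all `n ≥ N`, if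
`∑_{n ≥ N} 1/r_n` diverges then `b_n/(a_n + b_n) → 0`. -/
theorem inside_ratio_tendsto_zero (a b r δ : ℕ → ℝ)
    (ha : ∀ n, 0 ≤ a n) (hb : ∀ n, 0 ≤ b n)
    (hr : ∀ n, 2 ≤ r n) (hδ : ∀ n, δ n = 0 ∨ δ n = 1)
    (hrec_a : ∀ n, a (n + 1) = r n * a n + δ n * b n)
    (hrec_b : ∀ n, b (n + 1) = (r n - δ n) * b n)
    (ha0 : a 0 = 0) (hb0 : 0 < b 0)
    (N : ℕ) (hN : ∀ n, N ≤ n → δ n = 1)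
    (hdiv : Tendsto (fun m => ∑ n ∈ Finset.Icc N m, 1 / r n) atTop atTop) :
    Tendsto (fun n => b n / (a n + b n)) atTop (nhds 0) := by
  have hrpos : ∀ n, (0:ℝ) < r n := fun n => lt_of_lt_of_le two_pos (hr n)
  have hspos : ∀ n, 0 < a n + b n := by
    intro n
    induction n with
    | zero => simpa [ha0] using hb0
    | succ k ih =>
      have h : a (k+1) + b (k+1) = r k * (a k + b k) := by
        rw [hrec_a, hrec_b]; ring
      rw [h]; exact mul_pos (hrpos k) ih
  have hq : ∀ n, N ≤ n →
      b (n+1) / (a (n+1) + b (n+1)) = (1 - 1 / r n) * (b n / (a n + b n)) := by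
    intro n hn
    have hδ1 := hN n hn
    have hs1 : a (n+1) + b (n+1) = r n * (a n + b n) := by
      rw [hrec_a, hrec_b]; ring
    rw [hs1, hrec_b n, hδ1]
    have h1 := (hspos n).ne'
    have h2 := (hrpos n).ne'
    field_simp
  have hqnn : ∀ n, 0 ≤ b n / (a n + b n) :=
    fun n => div_nonneg (hb n) (hspos n).le
  have hfac : ∀ n, 1 - 1 / r n ≤ Real.exp (-(1 / r n)) := by
    intro n
    have := Real.add_one_le_exp (-(1 / r n))
    linarith
  have key : ∀ m : ℕ, b (N + m + 1) / (a (N + m + 1) + b (N + m + 1)) ≤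
      (b N / (a N + b N)) * Real.exp (-(∑ k ∈ Finset.Icc N (N + m), 1 / r k)) := by
    intro m
    induction m with
    | zero =>
      simp only [Nat.add_zero, Finset.Icc_self, Finset.sum_singleton]
      rw [hq N le_rfl, mul_comm]
      exact mul_le_mul_of_nonneg_left (hfac N) (hqnn N)
    | succ m ih =>
      have hn : N ≤ N + m + 1 := by omega
      have hstep := hq (N + m + 1) hn
      have hsum : ∑ k ∈ Finset.Icc N (N + m + 1), 1 / r k
          = (∑ k ∈ Finset.Icc N (N + m), 1 / r k) + 1 / r (N + m + 1) :=
        Finset.sum_Icc_succ_top (by omega) _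
      have hexp : Real.exp (-(∑ k ∈ Finset.Icc N (N + m + 1), 1 / r k))
          = Real.exp (-(1 / r (N + m + 1))) * Real.exp (-(∑ k ∈ Finset.Icc N (N + m), 1 / r k)) := by
        rw [← Real.exp_add, hsum]; congr 1; ring
      have e1 : N + (m + 1) + 1 = (N + m + 1) + 1 := by omega
      rw [show N + (m + 1) = N + m + 1 from by omega] at *
      rw [hstep, hexp]
      have hb1 : (1 - 1 / r (N + m + 1)) * (b (N+m+1) / (a (N+m+1) + b (N+m+1)))
          ≤ Real.exp (-(1 / r (N + m + 1))) * ((b N / (a N + b N)) * Real.exp (-(∑ k ∈ Finset.Icc N (N + m), 1 / r k))) := by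
        apply mul_le_mul (hfac _) ih (hqnn _) (Real.exp_nonneg _)
      calc (1 - 1 / r (N + m + 1)) * (b (N+m+1) / (a (N+m+1) + b (N+m+1)))
          ≤ Real.exp (-(1 / r (N + m + 1))) * ((b N / (a N + b N)) * Real.exp (-(∑ k ∈ Finset.Icc N (N + m), 1 / r k))) := hb1
        _ = b N / (a N + b N) * (Real.exp (-(1 / r (N + m + 1))) * Real.exp (-(∑ k ∈ Finset.Icc N (N + m), 1 / r k))) := by ring
  have hlim : Tendsto (fun n => (b N / (a N + b N)) *
      Real.exp (-(∑ k ∈ Finset.Icc N (n - 1), 1 / r k))) atTop (nhds 0) := by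
    have h1 : Tendsto (fun n : ℕ => ∑ k ∈ Finset.Icc N (n - 1), 1 / r k) atTop atTop :=
      hdiv.comp (tendsto_sub_atTop_nat 1)
    have h2 : Tendsto (fun n : ℕ => Real.exp (-(∑ k ∈ Finset.Icc N (n - 1), 1 / r k)))
        atTop (nhds 0) := Real.tendsto_exp_neg_atTop_nhds_zero.comp h1
    simpa using h2.const_mul (b N / (a N + b N))
  apply tendsto_of_tendsto_of_tendsto_of_le_of_le' tendsto_const_nhds hlim
  · exact Eventually.of_forall hqnn
  · filter_upwards [eventually_ge_atTop (N+1)] with n hn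
    obtain ⟨m, rfl⟩ : ∃ m, n = N + m + 1 := ⟨n - N - 1, by omega⟩
    have h := key m
    have : N + m + 1 - 1 = N + m := by omega
    rw [this]
    exact h
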